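/- There exists a universal constant D (with D < 26.6) such that the following holds. Let M be a nonempty finite subset of an L1 space, let r > 0, and let ϖ0, ϖ1 : [0,∞) → [0,∞) be concave non-decreasing continuous functions vanishing only at 0, such that |ϖ0(t) − ϖ1(t)| ≤ 2r for all t ≥ 0. Then the r-twisted union (M × {0,1}, d) of the metric spaces (M, ϖ0(‖x−y‖₁)) and (M, ϖ1(‖x−y‖₁)) embeds into L1 with distortion at most D. -/

import Mathlib

open MeasureTheory

/-- `(M, f)` embeds into (some) `L₁` with distortion at most `K`, in the
generalized sense allowing `f` to be an arbitrary nonnegative function. -/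
def EmbedsL1 {M : Type*} (f : M → M → ℝ) (K : ℝ) : Prop :=
  ∃ (Ω : Type) (_ : MeasurableSpace Ω) (μ : Measure Ω) (Ψ : M → Lp ℝ 1 μ),
    ∀ x y, f x y ≤ ‖Ψ x - Ψ y‖ ∧ ‖Ψ x - Ψ y‖ ≤ K * f x y

/-- The metric of the (generalized) twisted union of `(M, d0)` and `(M, d1)`
with joining function `r`, realized on `M × Bool` (`false` plays the role of
`0` and `true` the role of `1`). -/
noncomputable def twistedDist {M : Type*} (d0 d1 : M → M → ℝ) (r : M → ℝ) :
    M × Bool → M × Bool → ℝ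
  | (x, false), (y, false) => d0 x y
  | (x, true),  (y, true)  => d1 x y
  | (x, false), (y, true)  => ⨅ z : M, d0 x z + d1 z y + r z
  | (x, true),  (y, false) => ⨅ z : M, d0 y z + d1 z x + r z



-- ===== aux1.lean =====
open MeasureTheory Finset

/-- upper exp bound: `1 - e^{-u} ≤ min u 1`. -/
lemma exp_upper {u : ℝ} (hu : 0 ≤ u) : 1 - Real.exp (-u) ≤ min u 1 := by
  have h1 : 1 - Real.exp (-u) ≤ u := by nlinarith [Real.add_one_le_exp (-u)]
  have h2 : 1 - Real.exp (-u) ≤ 1 := by nlinarith [Real.exp_pos (-u)]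
  exact le_min h1 h2

/-- lower exp bound: `(1 - e^{-2}) * min (u/2) 1 ≤ 1 - e^{-u}`. -/
lemma exp_lower {u : ℝ} (hu : 0 ≤ u) :
    (1 - Real.exp (-2)) * min (u/2) 1 ≤ 1 - Real.exp (-u) := by
  rcases le_total u 2 with h | h
  · have hmin : min (u/2) 1 = u/2 := min_eq_left (by linarith)
    rw [hmin]
    have ha' : (0:ℝ) ≤ 1 - u/2 := by linarith
    have hb' : (0:ℝ) ≤ u/2 := by linarith
    have hab' : (1 - u/2) + u/2 = (1:ℝ) := by ring
    have hc := convexOn_exp.2 (Set.mem_univ (0:ℝ)) (Set.mem_univ (-2:ℝ)) ha' hb' hab'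
    simp only [smul_eq_mul, mul_zero, Real.exp_zero] at hc
    rw [show (0:ℝ) + u / 2 * -2 = -u by ring] at hc
    nlinarith
  · have hmin : min (u/2) 1 = 1 := min_eq_right (by linarith)
    rw [hmin]
    have : Real.exp (-u) ≤ Real.exp (-2) := Real.exp_le_exp.2 (by linarith)
    nlinarith

lemma exp_neg_two_le_half : Real.exp (-2) ≤ 1/2 := by
  have h := Real.add_one_le_exp (2:ℝ)
  have h2 : Real.exp (-2) = 1 / Real.exp 2 := by
    rw [Real.exp_neg]; rw [inv_eq_one_div]
  rw [h2, div_le_div_iff₀ (Real.exp_pos 2) (by norm_num)]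
  linarith

/-- three point concavity inequality. -/
lemma three_point {u : ℝ → ℝ} (hu : ConcaveOn ℝ (Set.Ici 0) u) {a b c : ℝ}
    (ha : 0 ≤ a) (hab : a < b) (hbc : b < c) :
    (u c - u b) * (b - a) ≤ (u b - u a) * (c - b) := by
  have hca : 0 < c - a := by linarith
  have h1 : (0:ℝ) ≤ (c - b)/(c-a) := div_nonneg (by linarith) (le_of_lt hca)
  have h2 : (0:ℝ) ≤ (b - a)/(c-a) := div_nonneg (by linarith) (le_of_lt hca)
  have h3 : (c - b)/(c-a) + (b - a)/(c-a) = 1 := by field_simp; ring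
  have hc := hu.2 (Set.mem_Ici.2 ha) (Set.mem_Ici.2 (by linarith : (0:ℝ) ≤ c)) h1 h2 h3
  simp only [smul_eq_mul] at hc
  have harg : (c - b)/(c-a) * a + (b - a)/(c-a) * c = b := by field_simp; ring
  rw [harg] at hc
  have hc' := mul_le_mul_of_nonneg_right hc (le_of_lt hca)
  have hexp : ((c - b)/(c-a) * u a + (b - a)/(c-a) * u c) * (c - a)
      = (c-b) * u a + (b-a) * u c := by field_simp
  rw [hexp] at hc'
  nlinarith

/-- subadditivity of a concave function vanishing at 0. -/
lemma concave_subadd {u : ℝ → ℝ} (hu : ConcaveOn ℝ (Set.Ici 0) u) (h0 : u 0 = 0)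
    {a b : ℝ} (ha : 0 ≤ a) (hb : 0 ≤ b) : u (a + b) ≤ u a + u b := by
  rcases eq_or_lt_of_le (by linarith : (0:ℝ) ≤ a + b) with h | h
  · have ha0 : a = 0 := by linarith
    have hb0 : b = 0 := by linarith
    simp [ha0, hb0, h0]
  · have key : ∀ x : ℝ, 0 ≤ x → x ≤ a + b → x / (a+b) * u (a+b) ≤ u x := by
      intro x hx hxab
      have ha' : (0:ℝ) ≤ 1 - x/(a+b) := by
        have : x/(a+b) ≤ 1 := by rw [div_le_one h]; linarith
        linarith
      have hb' : (0:ℝ) ≤ x/(a+b) := by positivity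
      have hab' : (1 - x/(a+b)) + x/(a+b) = (1:ℝ) := by ring
      have hc := hu.2 (Set.mem_Ici.2 (le_refl (0:ℝ)))
        (Set.mem_Ici.2 (by linarith : (0:ℝ) ≤ a+b)) ha' hb' hab'
      simp only [smul_eq_mul, mul_zero, h0, add_zero, zero_add] at hc
      rw [show x/(a+b)*(a+b) = x by field_simp] at hc
      linarith [hc]
    have h1 := key a ha (by linarith)
    have h2 := key b hb (by linarith)
    have : a/(a+b) * u (a+b) + b/(a+b) * u (a+b) = u (a+b) := by field_simp
    linarith

/-- min of concave functions is concave. -/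
lemma concaveOn_min {u v : ℝ → ℝ} (hu : ConcaveOn ℝ (Set.Ici 0) u)
    (hv : ConcaveOn ℝ (Set.Ici 0) v) :
    ConcaveOn ℝ (Set.Ici 0) (fun t => min (u t) (v t)) := by
  refine ⟨hu.1, ?_⟩
  intro x hx y hy a b ha hb hab
  have h1 := hu.2 hx hy ha hb hab
  have h2 := hv.2 hx hy ha hb hab
  simp only [smul_eq_mul] at *
  have hu' : a * min (u x) (v x) + b * min (u y) (v y) ≤ a * u x + b * u y := by
    have := min_le_left (u x) (v x); have := min_le_left (u y) (v y)
    nlinarith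
  have hv' : a * min (u x) (v x) + b * min (u y) (v y) ≤ a * v x + b * v y := by
    have := min_le_right (u x) (v x); have := min_le_right (u y) (v y)
    nlinarith
  exact le_min (le_trans hu' h1) (le_trans hv' h2)


-- ===== aux2.lean =====
open Finset

/-- Interpolation of a discretely-concave nondecreasing function at finitely
many nodes by a nonnegative combination of `min`-functions. -/
lemma interp_exists :
    ∀ (n : ℕ) (ts : Finset ℝ) (u : ℝ → ℝ), ts.card = n →
    (∀ t ∈ ts, 0 < t) → u 0 = 0 →
    (∀ a ∈ insert 0 ts, ∀ b ∈ insert 0 ts, a ≤ b → u a ≤ u b) →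
    (∀ a ∈ insert 0 ts, ∀ b ∈ insert 0 ts, ∀ c ∈ insert 0 ts, a < b → b < c →
      (u c - u b) * (b - a) ≤ (u b - u a) * (c - b)) →
    ∃ A : ℝ → ℝ, (∀ θ ∈ ts, 0 ≤ A θ) ∧
      ∀ t ∈ insert 0 ts, ∑ θ ∈ ts, A θ * min t θ = u t := by
  intro n
  induction n with
  | zero =>
    intro ts u hcard hpos h0 hmono hconc
    rw [Finset.card_eq_zero] at hcard
    subst hcard
    exact ⟨fun _ => 0, fun θ h => by simp at h, by
      intro t ht
      simp only [Finset.mem_insert, Finset.notMem_empty, or_false] at ht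
      simp [ht, h0]⟩
  | succ n ih =>
    intro ts u hcard hpos h0 hmono hconc
    have hne : ts.Nonempty := Finset.card_pos.1 (by omega)
    set m := ts.max' hne with hm_def
    have hm : m ∈ ts := ts.max'_mem hne
    set ts' : Finset ℝ := ts.erase m with hts'_def
    have hsub : ts' ⊆ ts := Finset.erase_subset _ _
    have hcard' : ts'.card = n := by
      rw [hts'_def, Finset.card_erase_of_mem hm, hcard]
      omega
    have hins : insert 0 ts' ⊆ insert 0 ts :=
      Finset.insert_subset_insert _ hsub
    set m' : ℝ := if h : ts'.Nonempty then ts'.max' h else 0 with hm'_def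
    have hm'mem : m' ∈ insert 0 ts' := by
      rw [hm'_def]
      split
      · exact Finset.mem_insert_of_mem (Finset.max'_mem _ _)
      · exact Finset.mem_insert_self _ _
    have hm'ub : ∀ t ∈ ts', t ≤ m' := by
      intro t ht
      rw [hm'_def]
      rw [dif_pos ⟨t, ht⟩]
      exact Finset.le_max' _ _ ht
    have hm'0 : 0 ≤ m' := by
      rcases Finset.mem_insert.1 hm'mem with h | h
      · linarith [h.symm.le]
      · exact (hpos _ (hsub h)).le
    have hm'lt : m' < m := by
      rw [hm'_def]
      split
      · next h =>
        have h1 : ts'.max' h ∈ ts' := Finset.max'_mem _ _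
        have h2 := Finset.le_max' ts _ (hsub h1)
        have h3 := Finset.ne_of_mem_erase h1
        exact lt_of_le_of_ne h2 h3
      · exact hpos _ hm
    have hmm' : 0 < m - m' := by linarith
    set sm : ℝ := (u m - u m') / (m - m') with hsm_def
    have hm'memts : m' ∈ insert 0 ts := hins hm'mem
    have hmmem : m ∈ insert 0 ts := Finset.mem_insert_of_mem hm
    have hsm0 : 0 ≤ sm :=
      div_nonneg (by linarith [hmono m' hm'memts m hmmem hm'lt.le]) hmm'.le
    -- slope comparison: for a < b ≤ m' in the node set, slope(a,b) ≥ sm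
    have slope_ge : ∀ a ∈ insert 0 ts, ∀ b ∈ insert 0 ts, 0 ≤ a → a < b → b ≤ m' →
        (u m - u m') * (b - a) ≤ (u b - u a) * (m - m') := by
      intro a ha b hb ha0 hab hbm'
      rcases eq_or_lt_of_le hbm' with h | h
      · subst h
        have := hconc a ha m' hm'memts m hmmem hab hm'lt
        linarith
      · have h1 := hconc a ha b hb m' hm'memts hab h
        have h2 := hconc b hb m' hm'memts m hmmem h hm'lt
        have k1 := mul_le_mul_of_nonneg_right h2 (by linarith : (0:ℝ) ≤ b - a)
        have k2 := mul_le_mul_of_nonneg_right h1 (by linarith : (0:ℝ) ≤ m - m')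
        have key : ((u m - u m') * (b - a)) * (m' - b) ≤ ((u b - u a) * (m - m')) * (m' - b) := by
          nlinarith [k1, k2]
        exact le_of_mul_le_mul_right key (by linarith)
    set u' : ℝ → ℝ := fun t => u t - sm * t with hu'_def
    have hmono' : ∀ a ∈ insert 0 ts', ∀ b ∈ insert 0 ts', a ≤ b → u' a ≤ u' b := by
      intro a ha b hb hab
      rcases eq_or_lt_of_le hab with rfl | hab
      · exact le_rfl
      · have ha0 : 0 ≤ a := by
          rcases Finset.mem_insert.1 ha with h | h
          · exact h.symm.le
          · exact (hpos _ (hsub h)).le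
        have hbm' : b ≤ m' := by
          rcases Finset.mem_insert.1 hb with h | h
          · exfalso; linarith [h ▸ hab, ha0]
          · exact hm'ub _ h
        have := slope_ge a (hins ha) b (hins hb) ha0 hab hbm'
        have hgoal : sm * (b - a) ≤ u b - u a := by
          rw [hsm_def]
          rw [div_mul_eq_mul_div, div_le_iff₀ hmm']
          linarith
        simp only [hu'_def]
        nlinarith [hgoal]
    have hconc' : ∀ a ∈ insert 0 ts', ∀ b ∈ insert 0 ts', ∀ c ∈ insert 0 ts',
        a < b → b < c → (u' c - u' b) * (b - a) ≤ (u' b - u' a) * (c - b) := by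
      intro a ha b hb c hc hab hbc
      have := hconc a (hins ha) b (hins hb) c (hins hc) hab hbc
      simp only [hu'_def]
      nlinarith [this]
    obtain ⟨A', hA'0, hA'sum⟩ := ih ts' u' hcard' (fun t ht => hpos t (hsub ht))
      (by simp [hu'_def, h0]) hmono' hconc'
    refine ⟨fun θ => if θ = m then sm else A' θ, ?_, ?_⟩
    · intro θ hθ
      dsimp only
      split
      · exact hsm0
      · next h =>
        exact hA'0 θ (Finset.mem_erase.2 ⟨h, hθ⟩)
    · intro t ht
      dsimp only
      have hts_eq : ts = insert m ts' := (Finset.insert_erase hm).symm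
      have hsum_split : ∑ θ ∈ ts, (if θ = m then sm else A' θ) * min t θ
          = sm * min t m + ∑ θ ∈ ts', A' θ * min t θ := by
        rw [← Finset.add_sum_erase ts _ hm]
        congr 1
        · simp
        · apply Finset.sum_congr rfl
          intro θ hθ
          rw [if_neg (Finset.ne_of_mem_erase hθ)]
      rw [hsum_split]
      rcases Finset.mem_insert.1 ht with rfl | htts
      · -- t = 0
        have : ∑ θ ∈ ts', A' θ * min 0 θ = u' 0 :=
          hA'sum 0 (Finset.mem_insert_self _ _)
        simp only [hu'_def] at this
        have hmin : min (0:ℝ) m = 0 := min_eq_left (hpos _ hm).le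
        rw [hmin, this]
        simp [h0]
      · rcases eq_or_ne t m with h | htm
        · -- t = m
          rw [h]
          have hmin : min m m = m := min_self m
          have hstep : ∑ θ ∈ ts', A' θ * min m θ = ∑ θ ∈ ts', A' θ * min m' θ := by
            apply Finset.sum_congr rfl
            intro θ hθ
            have h1 : θ ≤ m' := hm'ub _ hθ
            have h2 : θ ≤ m := le_trans h1 hm'lt.le
            rw [min_eq_right h1, min_eq_right h2]
          rw [hmin, hstep, hA'sum m' hm'mem]
          simp only [hu'_def]
          rw [hsm_def]
          field_simp
          ring
        · -- t ∈ ts'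
          have htts' : t ∈ ts' := Finset.mem_erase.2 ⟨htm, htts⟩
          have htm' : t ≤ m' := hm'ub _ htts'
          have hmin : min t m = t := min_eq_left (by linarith)
          rw [hmin, hA'sum t (Finset.mem_insert_of_mem htts')]
          simp only [hu'_def]
          ring


-- ===== aux4.lean =====
open MeasureTheory

lemma exists_lp_embedding {F : Type*} (ι : Type) [Fintype ι] (G : F → ι → ℝ) :
    ∃ (Ω' : Type) (m' : MeasurableSpace Ω') (μ' : Measure Ω') (Ψ : F → Lp ℝ 1 μ'),
      ∀ a b : F, ‖Ψ a - Ψ b‖ = ∑ i : ι, |G a i - G b i| := by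
  letI : MeasurableSpace ι := ⊤
  haveI : MeasurableSingletonClass ι := ⟨fun _ => trivial⟩
  have hmem : ∀ a, MemLp (G a) 1 (Measure.count : Measure ι) := by
    intro a
    constructor
    · exact (Measurable.stronglyMeasurable (fun _ _ => MeasurableSpace.measurableSet_top)).aestronglyMeasurable
    · rw [eLpNorm_one_eq_lintegral_enorm, lintegral_count, tsum_fintype]
      exact ENNReal.sum_lt_top.2 fun i _ => enorm_lt_top
  refine ⟨ι, ⊤, Measure.count, fun a => (hmem a).toLp (G a), ?_⟩
  intro a b
  have hsub : (hmem a).toLp (G a) - (hmem b).toLp (G b)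
      = ((hmem a).sub (hmem b)).toLp (G a - G b) := by
    rw [MemLp.toLp_sub]
  rw [hsub, Lp.norm_toLp, eLpNorm_one_eq_lintegral_enorm, lintegral_count, tsum_fintype]
  rw [ENNReal.toReal_sum (fun i _ => enorm_ne_top)]
  apply Finset.sum_congr rfl
  intro i _
  simp [Real.norm_eq_abs]


-- ===== aux5.lean =====
open MeasureTheory
open scoped ENNReal

/-- one-dimensional layer-cake for the separation indicator -/
lemma lintegral_sep_indicator (a b : ℝ) :
    ∫⁻ t : ℝ, (if ((t < a) ≠ (t < b)) then (1:ℝ≥0∞) else 0)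
      = ENNReal.ofReal |a - b| := by
  have key : ∀ u v : ℝ, u ≤ v → ∀ t : ℝ, ((t < u) ≠ (t < v)) ↔ (u ≤ t ∧ t < v) := by
    intro u v huv t
    constructor
    · intro h
      rcases lt_or_ge t u with h1 | h1
      · exact absurd (eq_iff_iff.2 ⟨fun _ => lt_of_lt_of_le h1 huv, fun _ => h1⟩) h
      · refine ⟨h1, ?_⟩
        by_contra h2
        push_neg at h2
        exact h (eq_iff_iff.2 ⟨fun hh => absurd hh (not_lt.2 h1),
          fun hh => absurd hh (not_lt.2 h2)⟩)
    · rintro ⟨h1, h2⟩ hc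
      rw [eq_iff_iff] at hc
      exact (not_lt.2 h1) (hc.2 h2)
  have hset : {t : ℝ | (t < a) ≠ (t < b)} = Set.Ico (min a b) (max a b) := by
    ext t
    rcases le_total a b with hab | hab
    · rw [min_eq_left hab, max_eq_right hab]
      exact key a b hab t
    · rw [min_eq_right hab, max_eq_left hab]
      have := key b a hab t
      simp only [Set.mem_setOf_eq, Set.mem_Ico]
      rw [← this]
      constructor
      · intro h; exact fun hc => h hc.symm
      · intro h; exact fun hc => h hc.symm
  have heq : (fun t : ℝ => (if ((t < a) ≠ (t < b)) then (1:ℝ≥0∞) else 0))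
      = Set.indicator {t : ℝ | (t < a) ≠ (t < b)} (fun _ => 1) := by
    ext t
    rw [Set.indicator_apply]
    rfl
  rw [heq, hset, lintegral_indicator_const measurableSet_Ico, Real.volume_Ico]
  rw [one_mul]
  congr 1
  rw [abs_sub_comm, ← max_sub_min_eq_abs]

section CutDecomp
variable {Ω : Type} [MeasurableSpace Ω] {μ : Measure Ω}

/-- Cut decomposition of the `L₁`-metric of a finite subset of `L₁`. -/
lemma cut_decomposition (s : Set (Lp ℝ 1 μ)) [Fintype ↥s] [DecidableEq ↥s] (x₀ : ↥s) :
    ∃ lam : (↥s → Bool) → ℝ, (∀ p, 0 ≤ lam p) ∧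
      ∀ x y : ↥s, ‖(x : Lp ℝ 1 μ) - (y : Lp ℝ 1 μ)‖
        = ∑ p : ↥s → Bool, lam p * (if p x ≠ p y then 1 else 0) := by
  classical
  -- measurable representatives
  have hrep : ∀ z : ↥s, ∃ g : Ω → ℝ, Measurable g ∧ (⇑(z : Lp ℝ 1 μ) =ᵐ[μ] g) := by
    intro z
    have h := (Lp.memLp (z : Lp ℝ 1 μ)).aestronglyMeasurable
    exact ⟨h.mk _, h.stronglyMeasurable_mk.measurable, h.ae_eq_mk⟩
  choose g hgmeas hgae using hrep
  -- patterns
  set patt : Ω → ℝ → ↥s → Bool := fun ω t z => decide (t < g z ω) with hpatt_def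
  set Φ : (↥s → Bool) → Ω × ℝ → ℝ≥0∞ :=
    fun p q => if patt q.1 q.2 = p then 1 else 0 with hΦ_def
  have hΦmeas : ∀ p, Measurable (Φ p) := by
    intro p
    have hs : MeasurableSet {q : Ω × ℝ | patt q.1 q.2 = p} := by
      have : {q : Ω × ℝ | patt q.1 q.2 = p}
          = ⋂ z : ↥s, {q : Ω × ℝ | (decide (q.2 < g z q.1) = p z)} := by
        ext q
        simp only [Set.mem_setOf_eq, Set.mem_iInter, funext_iff, hpatt_def]
      rw [this]
      apply MeasurableSet.iInter
      intro z
      have hlt : MeasurableSet {q : Ω × ℝ | q.2 < g z q.1} :=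
        measurableSet_lt measurable_snd ((hgmeas z).comp measurable_fst)
      rcases Bool.eq_false_or_eq_true (p z) with h | h
      · rw [h]
        have heq2 : {q : Ω × ℝ | (decide (q.2 < g z q.1) = true)}
            = {q : Ω × ℝ | q.2 < g z q.1} := by
          ext q; simp
        rw [heq2]; exact hlt
      · rw [h]
        have heq2 : {q : Ω × ℝ | (decide (q.2 < g z q.1) = false)}
            = {q : Ω × ℝ | q.2 < g z q.1}ᶜ := by
          ext q; simp
        rw [heq2]; exact hlt.compl
    have : Φ p = Set.indicator {q : Ω × ℝ | patt q.1 q.2 = p} (fun _ => 1) := by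
      ext q; rw [Set.indicator_apply]; rfl
    rw [this]
    exact measurable_const.indicator hs
  -- separation indicator
  set sep : ↥s → ↥s → Ω × ℝ → ℝ≥0∞ :=
    fun x y q => if ((q.2 < g x q.1) ≠ (q.2 < g y q.1)) then 1 else 0 with hsep_def
  -- Claim B : double integral of sep is the distance
  have claimB : ∀ x y : ↥s,
      ∫⁻ ω, (∫⁻ t, sep x y (ω, t)) ∂μ = ENNReal.ofReal ‖(x : Lp ℝ 1 μ) - (y : Lp ℝ 1 μ)‖ := by
    intro x y
    have hinner : ∀ ω, ∫⁻ t, sep x y (ω, t) = ENNReal.ofReal |g x ω - g y ω| := by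
      intro ω
      exact lintegral_sep_indicator (g x ω) (g y ω)
    simp_rw [hinner]
    have hnorm : ‖(x : Lp ℝ 1 μ) - (y : Lp ℝ 1 μ)‖
        = (∫⁻ ω, ENNReal.ofReal |g x ω - g y ω| ∂μ).toReal := by
      rw [Lp.norm_def, eLpNorm_one_eq_lintegral_enorm]
      congr 1
      apply lintegral_congr_ae
      have h1 := Lp.coeFn_sub (x : Lp ℝ 1 μ) (y : Lp ℝ 1 μ)
      filter_upwards [h1, hgae x, hgae y] with ω hω hx hy
      rw [hω]
      simp only [Pi.sub_apply, hx, hy]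
      rw [← ofReal_norm, Real.norm_eq_abs]
    rw [hnorm, ENNReal.ofReal_toReal]
    -- finiteness
    have : ∫⁻ ω, ENNReal.ofReal |g x ω - g y ω| ∂μ
        = ∫⁻ ω, ‖(⇑((x : Lp ℝ 1 μ) - (y : Lp ℝ 1 μ))) ω‖ₑ ∂μ := by
      apply lintegral_congr_ae
      have h1 := Lp.coeFn_sub (x : Lp ℝ 1 μ) (y : Lp ℝ 1 μ)
      filter_upwards [h1, hgae x, hgae y] with ω hω hx hy
      rw [hω]
      simp only [Pi.sub_apply, hx, hy]
      rw [← ofReal_norm, Real.norm_eq_abs]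
    rw [this, ← eLpNorm_one_eq_lintegral_enorm]
    exact (Lp.memLp _).eLpNorm_lt_top.ne
  -- the coefficients
  set lamE : (↥s → Bool) → ℝ≥0∞ := fun p => ∫⁻ ω, (∫⁻ t, Φ p (ω, t)) ∂μ with hlamE_def
  have hlamE_fin : ∀ p : ↥s → Bool, (∃ z, p z ≠ p x₀) → lamE p < ⊤ := by
    intro p ⟨z, hz⟩
    have hle : ∀ q : Ω × ℝ, Φ p q ≤ sep z x₀ q := by
      intro q
      rw [hΦ_def, hsep_def]
      dsimp only
      split
      · next h =>
        rw [if_pos]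
        have hz' : patt q.1 q.2 z = p z := by rw [h]
        have hx0' : patt q.1 q.2 x₀ = p x₀ := by rw [h]
        rw [hpatt_def] at hz' hx0'
        simp only at hz' hx0'
        intro hc
        rw [eq_iff_iff] at hc
        apply hz
        rw [← hz', ← hx0']
        simp only [decide_eq_decide]
        exact hc
      · exact zero_le
    calc lamE p ≤ ∫⁻ ω, (∫⁻ t, sep z x₀ (ω, t)) ∂μ := by
          apply lintegral_mono
          intro ω
          exact lintegral_mono fun t => hle (ω, t)
      _ = ENNReal.ofReal ‖(z : Lp ℝ 1 μ) - (x₀ : Lp ℝ 1 μ)‖ := claimB z x₀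
      _ < ⊤ := ENNReal.ofReal_lt_top
  refine ⟨fun p => if ∃ z, p z ≠ p x₀ then (lamE p).toReal else 0, ?_, ?_⟩
  · intro p
    dsimp only
    split
    · exact ENNReal.toReal_nonneg
    · exact le_refl 0
  · intro x y
    -- pointwise splitting
    have hsplit : ∀ q : Ω × ℝ,
        sep x y q = ∑ p : ↥s → Bool, (if p x ≠ p y then (1:ℝ≥0∞) else 0) * Φ p q := by
      intro q
      set q0 : ↥s → Bool := patt q.1 q.2 with hq0
      rw [Finset.sum_eq_single q0]
      · have hq0mem : Φ q0 q = 1 := by rw [hΦ_def]; simp [hq0]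
        rw [hq0mem, mul_one, hsep_def]
        dsimp only
        have : (q0 x ≠ q0 y) ↔ ((q.2 < g x q.1) ≠ (q.2 < g y q.1)) := by
          rw [hq0, hpatt_def]
          simp only [ne_eq, decide_eq_decide]
          rw [eq_iff_iff]
        by_cases h : (q.2 < g x q.1) ≠ (q.2 < g y q.1)
        · rw [if_pos h, if_pos (this.2 h)]
        · rw [if_neg h, if_neg (fun hc => h (this.1 hc))]
      · intro p _ hp
        have : Φ p q = 0 := by
          rw [hΦ_def]
          dsimp only
          rw [if_neg]
          rw [← hq0]
          exact fun hc => hp hc.symm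
        rw [this, mul_zero]
      · intro h
        exact absurd (Finset.mem_univ q0) h
    -- integrate
    have hmeas_inner : ∀ p : ↥s → Bool, Measurable fun ω => ∫⁻ t, Φ p (ω, t) := by
      intro p
      exact Measurable.lintegral_prod_right (f := fun ω t => Φ p (ω, t)) (hΦmeas p)
    have hint : ∫⁻ ω, (∫⁻ t, sep x y (ω, t)) ∂μ
        = ∑ p : ↥s → Bool, (if p x ≠ p y then (1:ℝ≥0∞) else 0) * lamE p := by
      calc ∫⁻ ω, (∫⁻ t, sep x y (ω, t)) ∂μ
          = ∫⁻ ω, (∫⁻ t, ∑ p : ↥s → Bool, (if p x ≠ p y then (1:ℝ≥0∞) else 0) * Φ p (ω, t)) ∂μ := by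
            apply lintegral_congr
            intro ω
            apply lintegral_congr
            intro t
            exact hsplit (ω, t)
        _ = ∫⁻ ω, (∑ p : ↥s → Bool, (if p x ≠ p y then (1:ℝ≥0∞) else 0) * ∫⁻ t, Φ p (ω, t)) ∂μ := by
            apply lintegral_congr
            intro ω
            rw [lintegral_finset_sum]
            · apply Finset.sum_congr rfl
              intro p _
              rw [lintegral_const_mul]
              exact (hΦmeas p).comp measurable_prodMk_left
            · intro p _
              exact Measurable.const_mul ((hΦmeas p).comp measurable_prodMk_left) _
        _ = ∑ p : ↥s → Bool, (if p x ≠ p y then (1:ℝ≥0∞) else 0) * lamE p := by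
            rw [lintegral_finset_sum]
            · apply Finset.sum_congr rfl
              intro p _
              rw [lintegral_const_mul]
              exact hmeas_inner p
            · intro p _
              exact Measurable.const_mul (hmeas_inner p) _
    have hfin : ∀ p ∈ (Finset.univ : Finset (↥s → Bool)),
        (if p x ≠ p y then (1:ℝ≥0∞) else 0) * lamE p ≠ ⊤ := by
      intro p _
      by_cases h : p x ≠ p y
      · rw [if_pos h, one_mul]
        apply (hlamE_fin p ?_).ne
        by_cases hx0 : p x = p x₀
        · exact ⟨y, fun hc => h (hx0.trans hc.symm ▸ rfl)⟩
        · exact ⟨x, hx0⟩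
      · rw [if_neg h, zero_mul]
        exact ENNReal.zero_ne_top
    have := claimB x y
    rw [hint] at this
    have hnorm : ‖(x : Lp ℝ 1 μ) - (y : Lp ℝ 1 μ)‖
        = (∑ p : ↥s → Bool, (if p x ≠ p y then (1:ℝ≥0∞) else 0) * lamE p).toReal := by
      rw [this, ENNReal.toReal_ofReal (norm_nonneg _)]
    rw [hnorm, ENNReal.toReal_sum hfin]
    apply Finset.sum_congr rfl
    intro p _
    dsimp only
    by_cases h : p x ≠ p y
    · rw [if_pos h, if_pos h, one_mul, mul_one]
      rw [if_pos]
      by_cases hx0 : p x = p x₀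
      · exact ⟨y, fun hc => h (hx0.trans hc.symm ▸ rfl)⟩
      · exact ⟨x, hx0⟩
    · rw [if_neg h, if_neg h, zero_mul, mul_zero, ENNReal.toReal_zero]
end CutDecomp


-- ===== aux6.lean =====
open Finset

noncomputable def cutKer (ts : Finset ℝ) (A : ℝ → ℝ) (t : ℝ) : ℝ :=
  ∑ θ ∈ ts, (A θ * θ / (1 - Real.exp (-2))) * (1 - Real.exp (-(2 * t) / θ))

lemma hE1pos : (0:ℝ) < 1 - Real.exp (-2) := by
  have : Real.exp (-2) < 1 := Real.exp_lt_one_iff.2 (by norm_num)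
  linarith

lemma hE1half : (1:ℝ)/2 ≤ 1 - Real.exp (-2) := by
  have h : (3:ℝ) ≤ Real.exp 2 := by nlinarith [Real.add_one_le_exp (2:ℝ)]
  have hmul : Real.exp (-2) * Real.exp 2 = 1 := by
    rw [← Real.exp_add]; norm_num
  nlinarith [Real.exp_pos (-2)]

lemma exp_upper' {u : ℝ} (hu : 0 ≤ u) : 1 - Real.exp (-u) ≤ min u 1 := by
  have h1 : 1 - Real.exp (-u) ≤ u := by nlinarith [Real.add_one_le_exp (-u)]
  have h2 : 1 - Real.exp (-u) ≤ 1 := by nlinarith [Real.exp_pos (-u)]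
  exact le_min h1 h2

lemma exp_lower' {u : ℝ} (hu : 0 ≤ u) :
    (1 - Real.exp (-2)) * min (u/2) 1 ≤ 1 - Real.exp (-u) := by
  rcases le_total u 2 with h | h
  · have hmin : min (u/2) 1 = u/2 := min_eq_left (by linarith)
    rw [hmin]
    have ha' : (0:ℝ) ≤ 1 - u/2 := by linarith
    have hb' : (0:ℝ) ≤ u/2 := by linarith
    have hab' : (1 - u/2) + u/2 = (1:ℝ) := by ring
    have hc := convexOn_exp.2 (Set.mem_univ (0:ℝ)) (Set.mem_univ (-2:ℝ)) ha' hb' hab'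
    simp only [smul_eq_mul, mul_zero, Real.exp_zero] at hc
    rw [show (0:ℝ) + u / 2 * -2 = -u by ring] at hc
    nlinarith
  · have hmin : min (u/2) 1 = 1 := min_eq_right (by linarith)
    rw [hmin]
    have : Real.exp (-u) ≤ Real.exp (-2) := Real.exp_le_exp.2 (by linarith)
    nlinarith

lemma cutKer_lower (ts : Finset ℝ) (A : ℝ → ℝ) (hA : ∀ θ ∈ ts, 0 ≤ A θ)
    (hpos : ∀ θ ∈ ts, 0 < θ) {t : ℝ} (ht : 0 ≤ t) :
    ∑ θ ∈ ts, A θ * min t θ ≤ cutKer ts A t := by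
  apply Finset.sum_le_sum
  intro θ hθ
  have hθ0 := hpos θ hθ
  have hA0 := hA θ hθ
  have hu : (0:ℝ) ≤ 2 * t / θ := by positivity
  have hX := exp_lower' hu
  rw [show (2 * t / θ) / 2 = t / θ by ring] at hX
  have hmin : min (t/θ) 1 = min t θ / θ := by
    rcases le_total t θ with h | h
    · rw [min_eq_left ((div_le_one hθ0).2 h), min_eq_left h]
    · rw [min_eq_right ((one_le_div hθ0).2 h), min_eq_right h, div_self hθ0.ne']
  rw [hmin] at hX
  have harg : -(2 * t) / θ = -(2 * t / θ) := by ring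
  rw [harg]
  -- A θ * min t θ ≤ (A θ * θ / E1) * X  where X ≥ E1 * (min t θ / θ)
  have hc0 : 0 ≤ A θ * θ / (1 - Real.exp (-2)) := by
    apply div_nonneg (by positivity) hE1pos.le
  calc A θ * min t θ
      = (A θ * θ / (1 - Real.exp (-2))) * ((1 - Real.exp (-2)) * (min t θ / θ)) := by
        have hE1 : (1 - Real.exp (-2)) ≠ 0 := hE1pos.ne'
        have hθne : θ ≠ 0 := hθ0.ne'
        field_simp
    _ ≤ (A θ * θ / (1 - Real.exp (-2))) * (1 - Real.exp (-(2 * t / θ))) :=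
        mul_le_mul_of_nonneg_left hX hc0

lemma cutKer_upper (ts : Finset ℝ) (A : ℝ → ℝ) (hA : ∀ θ ∈ ts, 0 ≤ A θ)
    (hpos : ∀ θ ∈ ts, 0 < θ) {t : ℝ} (ht : 0 ≤ t) :
    cutKer ts A t ≤ 4 * ∑ θ ∈ ts, A θ * min t θ := by
  rw [Finset.mul_sum]
  apply Finset.sum_le_sum
  intro θ hθ
  have hθ0 := hpos θ hθ
  have hA0 := hA θ hθ
  have hu : (0:ℝ) ≤ 2 * t / θ := by positivity
  have hX := exp_upper' hu
  have harg : -(2 * t) / θ = -(2 * t / θ) := by ring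
  rw [harg]
  have hmtn : (0:ℝ) ≤ min t θ := le_min ht hθ0.le
  have hc0 : 0 ≤ A θ * θ / (1 - Real.exp (-2)) := div_nonneg (by positivity) hE1pos.le
  have hm2 : min (2*t/θ) 1 * θ = min (2*t) θ := by
    rcases le_total (2*t) θ with h | h
    · rw [min_eq_left ((div_le_one hθ0).2 h), min_eq_left h]
      field_simp
    · rw [min_eq_right ((one_le_div hθ0).2 h), min_eq_right h, one_mul]
  have hm3 : min (2*t) θ ≤ 2 * min t θ := by
    rcases le_total t θ with h | h
    · rw [min_eq_left h]; exact min_le_left _ _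
    · rw [min_eq_right h]
      have := min_le_right (2*t) θ
      linarith
  have h14 : A θ / (1 - Real.exp (-2)) ≤ 2 * A θ := by
    rw [div_le_iff₀ hE1pos]
    nlinarith [hE1half]
  have hXle : 1 - Real.exp (-(2 * t / θ)) ≤ min (2*t/θ) 1 := by
    have := exp_upper' hu
    linarith [this]
  calc (A θ * θ / (1 - Real.exp (-2))) * (1 - Real.exp (-(2 * t / θ)))
      ≤ (A θ * θ / (1 - Real.exp (-2))) * min (2*t/θ) 1 :=
        mul_le_mul_of_nonneg_left hXle hc0
    _ = (A θ / (1 - Real.exp (-2))) * (min (2*t/θ) 1 * θ) := by ring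
    _ = (A θ / (1 - Real.exp (-2))) * min (2*t) θ := by rw [hm2]
    _ ≤ (A θ / (1 - Real.exp (-2))) * (2 * min t θ) :=
        mul_le_mul_of_nonneg_left hm3 (div_nonneg hA0 hE1pos.le)
    _ ≤ (2 * A θ) * (2 * min t θ) :=
        mul_le_mul_of_nonneg_right h14 (by linarith)
    _ = 4 * (A θ * min t θ) := by ring


-- ===== aux7.lean =====
open Finset

lemma prod_sum_bool {K : Type} [Fintype K] [DecidableEq K] (h : K → Bool → ℝ) :
    ∏ k : K, (h k true + h k false) = ∑ ε : K → Bool, ∏ k : K, h k (ε k) := by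
  have : ∀ k, h k true + h k false = ∑ b : Bool, h k b := by
    intro k; rw [Fintype.sum_bool]
  simp_rw [this]
  rw [Finset.prod_univ_sum, Fintype.piFinset_univ]

/-- the parity sum identity -/
lemma parity_sum {K : Type} [Fintype K] [DecidableEq K]
    (p : K → ℝ) (σ τ : K → Bool) :
    ∑ ε : K → Bool, (∏ k, (if ε k then p k else 1 - p k)) *
        |(∏ k, if σ k && ε k then (-1:ℝ) else 1) - (∏ k, if τ k && ε k then (-1:ℝ) else 1)|
      = 1 - ∏ k, (if σ k ≠ τ k then 1 - 2 * p k else 1) := by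
  classical
  have habs : ∀ ε : K → Bool,
      |(∏ k, if σ k && ε k then (-1:ℝ) else 1) - (∏ k, if τ k && ε k then (-1:ℝ) else 1)|
        = 1 - (∏ k, if σ k && ε k then (-1:ℝ) else 1) * (∏ k, if τ k && ε k then (-1:ℝ) else 1) := by
    intro ε
    have hA : (∏ k, if σ k && ε k then (-1:ℝ) else 1) = 1
        ∨ (∏ k, if σ k && ε k then (-1:ℝ) else 1) = -1 := by
      rw [← mul_self_eq_one_iff, ← Finset.prod_mul_distrib]
      apply Finset.prod_eq_one
      intro k _
      by_cases h : σ k && ε k <;> simp [h]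
    have hB : (∏ k, if τ k && ε k then (-1:ℝ) else 1) = 1
        ∨ (∏ k, if τ k && ε k then (-1:ℝ) else 1) = -1 := by
      rw [← mul_self_eq_one_iff, ← Finset.prod_mul_distrib]
      apply Finset.prod_eq_one
      intro k _
      by_cases h : τ k && ε k <;> simp [h]
    rcases hA with hA | hA <;> rcases hB with hB | hB <;> rw [hA, hB] <;> norm_num
  have hAB : ∀ ε : K → Bool,
      (∏ k, if σ k && ε k then (-1:ℝ) else 1) * (∏ k, if τ k && ε k then (-1:ℝ) else 1)
        = ∏ k, (if (σ k ≠ τ k) ∧ ε k = true then (-1:ℝ) else 1) := by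
    intro ε
    rw [← Finset.prod_mul_distrib]
    apply Finset.prod_congr rfl
    intro k _
    rcases Bool.eq_false_or_eq_true (σ k) with h1 | h1 <;>
      rcases Bool.eq_false_or_eq_true (τ k) with h2 | h2 <;>
      rcases Bool.eq_false_or_eq_true (ε k) with h3 | h3 <;>
      simp [h1, h2, h3]
  simp_rw [habs, hAB, mul_sub, mul_one]
  rw [Finset.sum_sub_distrib]
  have hsum1 : ∑ ε : K → Bool, (∏ k, (if ε k then p k else 1 - p k)) = 1 := by
    rw [← prod_sum_bool (fun k b => if b = true then p k else 1 - p k)]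
    simp
  have hsum2 : ∑ ε : K → Bool, (∏ k, (if ε k then p k else 1 - p k)) *
      (∏ k, (if (σ k ≠ τ k) ∧ ε k = true then (-1:ℝ) else 1))
      = ∏ k, (if σ k ≠ τ k then 1 - 2 * p k else 1) := by
    have : ∀ ε : K → Bool, (∏ k, (if ε k then p k else 1 - p k)) *
        (∏ k, (if (σ k ≠ τ k) ∧ ε k = true then (-1:ℝ) else 1))
        = ∏ k, ((if ε k then p k else 1 - p k) * (if (σ k ≠ τ k) ∧ ε k = true then (-1:ℝ) else 1)) := by
      intro ε; rw [← Finset.prod_mul_distrib]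
    simp_rw [this]
    rw [← prod_sum_bool (fun k b => (if b = true then p k else 1 - p k) *
      (if (σ k ≠ τ k) ∧ b = true then (-1:ℝ) else 1))]
    apply Finset.prod_congr rfl
    intro k _
    by_cases h : σ k ≠ τ k <;> simp [h] <;> ring
  rw [hsum1, hsum2]

/-- a full block computation: the `ℓ₁`-sum over one parity block equals
`c * (1 - exp (-(2 * ρ) / θ))` where `ρ = ∑ separating weights`. -/
lemma block_sum {K : Type} [Fintype K] [DecidableEq K]
    (lam : K → ℝ) (hlam : ∀ k, 0 ≤ lam k) (θ : ℝ) (hθ : 0 < θ)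
    (c : ℝ) (hc : 0 ≤ c) (σ τ : K → Bool) :
    ∑ ε : K → Bool,
      |c * ((∏ k, (if ε k then (1 - Real.exp (-(2 * lam k) / θ))/2
                    else 1 - (1 - Real.exp (-(2 * lam k) / θ))/2)) *
            (∏ k, if σ k && ε k then (-1:ℝ) else 1))
       - c * ((∏ k, (if ε k then (1 - Real.exp (-(2 * lam k) / θ))/2
                    else 1 - (1 - Real.exp (-(2 * lam k) / θ))/2)) *
            (∏ k, if τ k && ε k then (-1:ℝ) else 1))|
      = c * (1 - Real.exp (-(2 * ∑ k : K, lam k * (if σ k ≠ τ k then 1 else 0)) / θ)) := by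
  classical
  set p : K → ℝ := fun k => (1 - Real.exp (-(2 * lam k) / θ))/2 with hp_def
  set W : (K → Bool) → ℝ := fun ε => ∏ k, (if ε k then p k else 1 - p k) with hW_def
  have hexple : ∀ k, Real.exp (-(2 * lam k) / θ) ≤ 1 := by
    intro k
    apply Real.exp_le_one_iff.2
    apply div_nonpos_of_nonpos_of_nonneg (by linarith [hlam k]) hθ.le
  have hWnn : ∀ ε, 0 ≤ W ε := by
    intro ε
    apply Finset.prod_nonneg
    intro k _
    have h1 : Real.exp (-(2 * lam k) / θ) > 0 := Real.exp_pos _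
    have h2 := hexple k
    by_cases h : ε k <;> simp only [hW_def, hp_def, h] <;> norm_num <;> linarith
  have hstep : ∀ ε : K → Bool,
      |c * (W ε * (∏ k, if σ k && ε k then (-1:ℝ) else 1))
        - c * (W ε * (∏ k, if τ k && ε k then (-1:ℝ) else 1))|
      = c * (W ε * |(∏ k, if σ k && ε k then (-1:ℝ) else 1)
          - (∏ k, if τ k && ε k then (-1:ℝ) else 1)|) := by
    intro ε
    have hfac : c * (W ε * (∏ k, if σ k && ε k then (-1:ℝ) else 1))
        - c * (W ε * (∏ k, if τ k && ε k then (-1:ℝ) else 1))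
        = (c * W ε) * ((∏ k, if σ k && ε k then (-1:ℝ) else 1)
          - (∏ k, if τ k && ε k then (-1:ℝ) else 1)) := by ring
    rw [hfac, abs_mul, abs_of_nonneg (mul_nonneg hc (hWnn ε))]
    ring
  refine (Finset.sum_congr rfl (fun ε _ => hstep ε)).trans ?_
  have hmulsum : ∑ ε : K → Bool, c * (W ε * |(∏ k, if σ k && ε k then (-1:ℝ) else 1)
      - (∏ k, if τ k && ε k then (-1:ℝ) else 1)|)
      = c * ∑ ε : K → Bool, W ε * |(∏ k, if σ k && ε k then (-1:ℝ) else 1)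
      - (∏ k, if τ k && ε k then (-1:ℝ) else 1)| := by
    rw [Finset.mul_sum]
  rw [hmulsum]
  have key := parity_sum p σ τ
  have hWkey : ∑ ε : K → Bool, W ε * |(∏ k, if σ k && ε k then (-1:ℝ) else 1)
      - (∏ k, if τ k && ε k then (-1:ℝ) else 1)|
      = 1 - ∏ k, (if σ k ≠ τ k then 1 - 2 * p k else 1) := key
  rw [hWkey]
  congr 1
  congr 1
  -- ∏ (if sep then 1 - 2 p else 1) = exp(-(2 ρ)/θ)
  have hfact : ∀ k : K, (if σ k ≠ τ k then 1 - 2 * p k else 1)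
      = Real.exp (if σ k ≠ τ k then -(2 * lam k)/θ else 0) := by
    intro k
    by_cases h : σ k ≠ τ k
    · rw [if_pos h, if_pos h, hp_def]
      ring
    · rw [if_neg h, if_neg h, Real.exp_zero]
  calc (∏ k : K, (if σ k ≠ τ k then 1 - 2 * p k else 1))
      = ∏ k : K, Real.exp (if σ k ≠ τ k then -(2 * lam k)/θ else 0) := by
        exact Finset.prod_congr rfl fun k _ => hfact k
    _ = Real.exp (∑ k : K, (if σ k ≠ τ k then -(2 * lam k)/θ else 0)) := by
        rw [Real.exp_sum]
    _ = Real.exp (-(2 * ∑ k : K, lam k * (if σ k ≠ τ k then 1 else 0)) / θ) := by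
        congr 1
        have hterm : ∀ k : K, (if σ k ≠ τ k then -(2 * lam k)/θ else 0)
            = (-2/θ) * (lam k * (if σ k ≠ τ k then 1 else 0)) := by
          intro k
          by_cases h : σ k ≠ τ k
          · rw [if_pos h, if_pos h]; ring
          · rw [if_neg h, if_neg h]; ring
        simp_rw [hterm]
        rw [← Finset.mul_sum]
        ring


/-- Corollary 4.3: there is a universal constant `D < 26.6` bounding the
`L₁`-distortion of every `r`-twisted union of a finite subset of `L₁` equipped
with two metrics of the form `ϖᵢ(‖x - y‖₁)`, where the `ϖᵢ` are concave
non-decreasing continuous functions vanishing only at `0` with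
`|ϖ₀ - ϖ₁| ≤ 2r`. -/
theorem twisted_union_of_concave_moduli_embeds_L1 :
    ∃ D : ℝ, D < 26.6 ∧
      ∀ (Ω : Type) [inst : MeasurableSpace Ω] (μ : Measure Ω)
        (s : Set (Lp ℝ 1 μ)), s.Finite → s.Nonempty →
        ∀ (r : ℝ), 0 < r →
        ∀ (w0 w1 : ℝ → ℝ),
          ConcaveOn ℝ (Set.Ici 0) w0 → MonotoneOn w0 (Set.Ici 0) →
          ContinuousOn w0 (Set.Ici 0) → w0 0 = 0 → (∀ t > 0, 0 < w0 t) →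
          ConcaveOn ℝ (Set.Ici 0) w1 → MonotoneOn w1 (Set.Ici 0) →
          ContinuousOn w1 (Set.Ici 0) → w1 0 = 0 → (∀ t > 0, 0 < w1 t) →
          (∀ t ≥ (0 : ℝ), |w0 t - w1 t| ≤ 2 * r) →
          EmbedsL1
            (twistedDist (fun x y : s => w0 ‖(x : Lp ℝ 1 μ) - (y : Lp ℝ 1 μ)‖)
                         (fun x y : s => w1 ‖(x : Lp ℝ 1 μ) - (y : Lp ℝ 1 μ)‖)
                         (fun _ => r)) D := by
  refine ⟨25, by norm_num, ?_⟩
  intro Ω inst μ s hsfin hsne r hr w0 w1 hc0 hm0 _ h00 _ hc1 hm1 _ h10 _ hbound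
  classical
  haveI : Fintype ↥s := hsfin.fintype
  obtain ⟨x₀v, hx₀v⟩ := hsne
  set x₀ : ↥s := ⟨x₀v, hx₀v⟩ with hx₀def
  haveI : Nonempty ↥s := ⟨x₀⟩
  obtain ⟨lam, hlam0, hcut⟩ := cut_decomposition (μ := μ) s x₀
  set ρ : ↥s → ↥s → ℝ := fun x y => ‖(x : Lp ℝ 1 μ) - (y : Lp ℝ 1 μ)‖ with hρdef
  have hρap : ∀ x y : ↥s, ‖(x : Lp ℝ 1 μ) - (y : Lp ℝ 1 μ)‖ = ρ x y := fun _ _ => rfl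
  have hρ_nonneg : ∀ x y, 0 ≤ ρ x y := fun x y => norm_nonneg _
  have hρ_self : ∀ x, ρ x x = 0 := fun x => by simp [hρdef]
  have hρ_symm : ∀ x y, ρ x y = ρ y x := fun x y => norm_sub_rev _ _
  have hρ_tri : ∀ x z y, ρ x y ≤ ρ x z + ρ z y := by
    intro x z y
    rw [hρdef]
    dsimp only
    have : (x : Lp ℝ 1 μ) - y = ((x : Lp ℝ 1 μ) - z) + ((z : Lp ℝ 1 μ) - y) := by abel
    rw [this]
    exact norm_add_le _ _
  -- basic facts about the moduli
  have hw0nn : ∀ t, 0 ≤ t → 0 ≤ w0 t := by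
    intro t ht
    have := hm0 (Set.mem_Ici.2 (le_refl (0:ℝ))) (Set.mem_Ici.2 ht) ht
    rw [h00] at this; exact this
  have hw1nn : ∀ t, 0 ≤ t → 0 ≤ w1 t := by
    intro t ht
    have := hm1 (Set.mem_Ici.2 (le_refl (0:ℝ))) (Set.mem_Ici.2 ht) ht
    rw [h10] at this; exact this
  have hband : ∀ t, 0 ≤ t → w0 t - 2*r ≤ w1 t ∧ w1 t - 2*r ≤ w0 t := by
    intro t ht
    have := abs_le.1 (hbound t ht)
    constructor <;> linarith [this.1, this.2]
  -- the node set
  set ts : Finset ℝ :=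
    (Finset.image (fun q : ↥s × ↥s => ρ q.1 q.2) Finset.univ).filter (fun t => 0 < t)
    with htsdef
  have hts_pos : ∀ θ ∈ ts, 0 < θ := fun θ hθ => (Finset.mem_filter.1 hθ).2
  have hmem : ∀ x y : ↥s, ρ x y ∈ insert 0 ts := by
    intro x y
    rcases eq_or_lt_of_le (hρ_nonneg x y) with h | h
    · exact Finset.mem_insert.2 (Or.inl h.symm)
    · refine Finset.mem_insert_of_mem (Finset.mem_filter.2 ⟨?_, h⟩)
      exact Finset.mem_image.2 ⟨(x, y), Finset.mem_univ _, rfl⟩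
  have hnode_nonneg : ∀ a ∈ insert 0 ts, (0:ℝ) ≤ a := by
    intro a ha
    rcases Finset.mem_insert.1 ha with h | h
    · exact h.symm.le
    · exact (hts_pos a h).le
  -- moduli for the three blocks
  set u0 : ℝ → ℝ := fun t => min (w0 t) (2*r) with hu0def
  set u1 : ℝ → ℝ := fun t => min (w1 t) (2*r) with hu1def
  set um : ℝ → ℝ := fun t => min (w0 t) (w1 t) with humdef
  have hcu0 : ConcaveOn ℝ (Set.Ici 0) u0 := concaveOn_min hc0 (concaveOn_const _ (convex_Ici 0))
  have hcu1 : ConcaveOn ℝ (Set.Ici 0) u1 := concaveOn_min hc1 (concaveOn_const _ (convex_Ici 0))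
  have hcum : ConcaveOn ℝ (Set.Ici 0) um := concaveOn_min hc0 hc1
  have hmu0 : ∀ a b, 0 ≤ a → a ≤ b → u0 a ≤ u0 b := by
    intro a b ha hab
    exact min_le_min (hm0 (Set.mem_Ici.2 ha) (Set.mem_Ici.2 (le_trans ha hab)) hab) le_rfl
  have hmu1 : ∀ a b, 0 ≤ a → a ≤ b → u1 a ≤ u1 b := by
    intro a b ha hab
    exact min_le_min (hm1 (Set.mem_Ici.2 ha) (Set.mem_Ici.2 (le_trans ha hab)) hab) le_rfl
  have hmum : ∀ a b, 0 ≤ a → a ≤ b → um a ≤ um b := by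
    intro a b ha hab
    exact min_le_min (hm0 (Set.mem_Ici.2 ha) (Set.mem_Ici.2 (le_trans ha hab)) hab)
      (hm1 (Set.mem_Ici.2 ha) (Set.mem_Ici.2 (le_trans ha hab)) hab)
  have hu00 : u0 0 = 0 := by rw [hu0def]; simp [h00]; linarith
  have hu10 : u1 0 = 0 := by rw [hu1def]; simp [h10]; linarith
  have hum0 : um 0 = 0 := by rw [humdef]; simp [h00, h10]
  -- interpolation data
  have mkinterp : ∀ (u : ℝ → ℝ), ConcaveOn ℝ (Set.Ici 0) u →
      (∀ a b, 0 ≤ a → a ≤ b → u a ≤ u b) → u 0 = 0 →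
      ∃ A : ℝ → ℝ, (∀ θ ∈ ts, 0 ≤ A θ) ∧
        ∀ t ∈ insert 0 ts, ∑ θ ∈ ts, A θ * min t θ = u t := by
    intro u hconc hmono hu0'
    apply interp_exists ts.card ts u rfl hts_pos hu0'
    · intro a ha b hb hab
      exact hmono a b (hnode_nonneg a ha) hab
    · intro a ha b hb c hc hab hbc
      exact three_point hconc (hnode_nonneg a ha) hab hbc
  obtain ⟨A0, hA0nn, hA0⟩ := mkinterp u0 hcu0 hmu0 hu00
  obtain ⟨A1, hA1nn, hA1⟩ := mkinterp u1 hcu1 hmu1 hu10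
  obtain ⟨AM, hAMnn, hAM⟩ := mkinterp um hcum hmum hum0
  -- kernels
  have hKb : ∀ (A u : ℝ → ℝ), (∀ θ ∈ ts, 0 ≤ A θ) →
      (∀ t ∈ insert 0 ts, ∑ θ ∈ ts, A θ * min t θ = u t) →
      ∀ x y : ↥s, u (ρ x y) ≤ cutKer ts A (ρ x y) ∧ cutKer ts A (ρ x y) ≤ 4 * u (ρ x y) := by
    intro A u hA hid x y
    have h1 := cutKer_lower ts A hA hts_pos (hρ_nonneg x y)
    have h2 := cutKer_upper ts A hA hts_pos (hρ_nonneg x y)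
    rw [hid (ρ x y) (hmem x y)] at h1 h2
    exact ⟨h1, h2⟩
  have hK0 := hKb A0 u0 hA0nn hA0
  have hK1 := hKb A1 u1 hA1nn hA1
  have hKM := hKb AM um hAMnn hAM
  have hu0nn : ∀ t, 0 ≤ t → 0 ≤ u0 t := fun t ht => le_min (hw0nn t ht) (by linarith)
  have hu1nn : ∀ t, 0 ≤ t → 0 ≤ u1 t := fun t ht => le_min (hw1nn t ht) (by linarith)
  have humnn : ∀ t, 0 ≤ t → 0 ≤ um t := fun t ht => le_min (hw0nn t ht) (hw1nn t ht)
  have hK0nn : ∀ x y : ↥s, 0 ≤ cutKer ts A0 (ρ x y) :=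
    fun x y => le_trans (hu0nn _ (hρ_nonneg x y)) (hK0 x y).1
  have hK1nn : ∀ x y : ↥s, 0 ≤ cutKer ts A1 (ρ x y) :=
    fun x y => le_trans (hu1nn _ (hρ_nonneg x y)) (hK1 x y).1
  have hKMnn : ∀ x y : ↥s, 0 ≤ cutKer ts AM (ρ x y) :=
    fun x y => le_trans (humnn _ (hρ_nonneg x y)) (hKM x y).1
  have hK0diag : ∀ x : ↥s, cutKer ts A0 (ρ x x) = 0 := by
    intro x
    have h2 := (hK0 x x).2
    have h1 := hK0nn x x
    rw [hρ_self x] at h1 h2 ⊢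
    rw [hu00] at h2
    linarith
  have hK1diag : ∀ x : ↥s, cutKer ts A1 (ρ x x) = 0 := by
    intro x
    have h2 := (hK1 x x).2
    have h1 := hK1nn x x
    rw [hρ_self x] at h1 h2 ⊢
    rw [hu10] at h2
    linarith
  -- the embedding
  set Θ : Type := {θ : ℝ // θ ∈ ts} with hΘdef
  set E : Type := (↥s → Bool) → Bool with hEdef
  set ι : Type := Option ((Fin 3 × Θ) × E) with hιdef
  set pick : Fin 3 → Bool → ↥s → ↥s := fun tag i x =>
    if tag = 0 then (if i then x₀ else x) else if tag = 1 then (if i then x else x₀) else x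
    with hpickdef
  set Acoef : Fin 3 → (ℝ → ℝ) := fun tag =>
    if tag = 0 then A0 else if tag = 1 then A1 else AM with hAcoefdef
  have hAcoefnn : ∀ tag : Fin 3, ∀ θ ∈ ts, 0 ≤ Acoef tag θ := by
    intro tag θ hθ
    rw [hAcoefdef]
    dsimp only
    split
    · exact hA0nn θ hθ
    · split
      · exact hA1nn θ hθ
      · exact hAMnn θ hθ
  set G : ↥s × Bool → ι → ℝ := fun a o =>
    Option.elim o (if a.2 then r else 0) (fun w =>
      (Acoef w.1.1 (w.1.2 : ℝ) * (w.1.2 : ℝ) / (1 - Real.exp (-2))) *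
      ((∏ k : ↥s → Bool, (if w.2 k then (1 - Real.exp (-(2 * lam k) / (w.1.2 : ℝ)))/2
          else 1 - (1 - Real.exp (-(2 * lam k) / (w.1.2 : ℝ)))/2)) *
       (∏ k : ↥s → Bool, if k (pick w.1.1 a.2 a.1) && w.2 k then (-1:ℝ) else 1)))
    with hGdef
  obtain ⟨Ω', m', μ', Ψ, hΨ⟩ := exists_lp_embedding ι G
  -- the norm formula
  have hNsum : ∀ (x y : ↥s) (i j : Bool),
      (∑ o : ι, |G (x, i) o - G (y, j) o|)
        = |(if i then r else 0) - (if j then r else 0)|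
          + ∑ tag : Fin 3, cutKer ts (Acoef tag) (ρ (pick tag i x) (pick tag j y)) := by
    intro x y i j
    rw [show (Finset.univ.sum fun o : ι => |G (x, i) o - G (y, j) o|)
        = ∑ o : Option ((Fin 3 × Θ) × E), |G (x, i) o - G (y, j) o| from rfl]
    rw [Fintype.sum_option]
    congr 1
    rw [Fintype.sum_prod_type, Fintype.sum_prod_type]
    apply Finset.sum_congr rfl
    intro tag _
    unfold cutKer
    rw [← Finset.sum_coe_sort ts (fun θ => (Acoef tag θ * θ / (1 - Real.exp (-2)))
        * (1 - Real.exp (-(2 * ρ (pick tag i x) (pick tag j y)) / θ)))]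
    apply Finset.sum_congr rfl
    intro θ _
    have hθmem : (θ : ℝ) ∈ ts := θ.2
    have hθpos : (0:ℝ) < (θ : ℝ) := hts_pos _ hθmem
    have hcnn : 0 ≤ Acoef tag (θ : ℝ) * (θ : ℝ) / (1 - Real.exp (-2)) :=
      div_nonneg (mul_nonneg (hAcoefnn tag _ hθmem) hθpos.le) hE1pos.le
    have hbs := block_sum lam hlam0 (θ : ℝ) hθpos
      (Acoef tag (θ : ℝ) * (θ : ℝ) / (1 - Real.exp (-2))) hcnn
      (fun k => k (pick tag i x)) (fun k => k (pick tag j y))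
    have hsum : (∑ k : ↥s → Bool, lam k *
        (if k (pick tag i x) ≠ k (pick tag j y) then (1:ℝ) else 0))
        = ρ (pick tag i x) (pick tag j y) := (hcut (pick tag i x) (pick tag j y)).symm
    rw [hsum] at hbs
    exact hbs
  have hN : ∀ (x y : ↥s) (i j : Bool),
      ‖Ψ (x, i) - Ψ (y, j)‖
        = |(if i then r else 0) - (if j then r else 0)|
          + ∑ tag : Fin 3, cutKer ts (Acoef tag) (ρ (pick tag i x) (pick tag j y)) := by
    intro x y i j
    rw [hΨ (x, i) (y, j)]
    exact hNsum x y i j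
  -- pick and Acoef evaluations
  have e10 : (1 : Fin 3) ≠ 0 := by decide
  have e20 : (2 : Fin 3) ≠ 0 := by decide
  have e21 : (2 : Fin 3) ≠ 1 := by decide
  have hpick0f : ∀ x : ↥s, pick 0 false x = x := by intro x; rw [hpickdef]; simp
  have hpick0t : ∀ x : ↥s, pick 0 true x = x₀ := by intro x; rw [hpickdef]; simp
  have hpick1f : ∀ x : ↥s, pick 1 false x = x₀ := by
    intro x; rw [hpickdef]; simp [e10]
  have hpick1t : ∀ x : ↥s, pick 1 true x = x := by
    intro x; rw [hpickdef]; simp [e10]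
  have hpick2 : ∀ (b : Bool) (x : ↥s), pick 2 b x = x := by
    intro b x; rw [hpickdef]; simp [e20, e21]
  have hAc0 : Acoef 0 = A0 := by rw [hAcoefdef]; simp
  have hAc1 : Acoef 1 = A1 := by rw [hAcoefdef]; simp [e10]
  have hAc2 : Acoef 2 = AM := by rw [hAcoefdef]; simp [e20, e21]
  -- arithmetic helpers
  have hlow0 : ∀ t, 0 ≤ t → w0 t ≤ u0 t + um t := by
    intro t ht
    rw [hu0def, humdef]
    dsimp only
    rcases le_total (w0 t) (2*r) with h | h
    · rw [min_eq_left h]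
      have : (0:ℝ) ≤ min (w0 t) (w1 t) := le_min (hw0nn t ht) (hw1nn t ht)
      linarith
    · rw [min_eq_right h]
      have h2 : w0 t - 2*r ≤ min (w0 t) (w1 t) :=
        le_min (by linarith) (by linarith [(hband t ht).1])
      linarith
  have hlow1 : ∀ t, 0 ≤ t → w1 t ≤ u1 t + um t := by
    intro t ht
    rw [hu1def, humdef]
    dsimp only
    rcases le_total (w1 t) (2*r) with h | h
    · rw [min_eq_left h]
      have : (0:ℝ) ≤ min (w0 t) (w1 t) := le_min (hw0nn t ht) (hw1nn t ht)
      linarith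
    · rw [min_eq_right h]
      have h2 : w1 t - 2*r ≤ min (w0 t) (w1 t) :=
        le_min (by linarith [(hband t ht).2]) (by linarith)
      linarith
  have hu0le2r : ∀ t, u0 t ≤ 2*r := fun t => min_le_right _ _
  have hu1le2r : ∀ t, u1 t ≤ 2*r := fun t => min_le_right _ _
  have hu0lew0 : ∀ t, u0 t ≤ w0 t := fun t => min_le_left _ _
  have hu1lew1 : ∀ t, u1 t ≤ w1 t := fun t => min_le_left _ _
  have humlew0 : ∀ t, um t ≤ w0 t := fun t => min_le_left _ _
  have humlew1 : ∀ t, um t ≤ w1 t := fun t => min_le_right _ _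
  -- final verification
  refine ⟨Ω', m', μ', Ψ, ?_⟩
  rintro ⟨x, i⟩ ⟨y, j⟩
  cases i <;> cases j
  -- case (x, false) (y, false)
  · have hn := hN x y false false
    rw [Fin.sum_univ_three, hpick0f, hpick0f, hpick1f, hpick1f, hpick2, hpick2,
        hAc0, hAc1, hAc2, hK1diag x₀] at hn
    simp only [if_neg Bool.false_ne_true, sub_self, abs_zero, zero_add, add_zero] at hn
    have h1 := (hK0 x y).1
    have h2 := (hK0 x y).2
    have h3 := (hKM x y).1
    have h4 := (hKM x y).2
    constructor
    · show w0 (ρ x y) ≤ ‖Ψ (x, false) - Ψ (y, false)‖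
      rw [hn]
      have := hlow0 (ρ x y) (hρ_nonneg x y)
      linarith
    · show ‖Ψ (x, false) - Ψ (y, false)‖ ≤ 25 * w0 (ρ x y)
      rw [hn]
      have := hu0lew0 (ρ x y)
      have := humlew0 (ρ x y)
      have := hw0nn (ρ x y) (hρ_nonneg x y)
      linarith
  -- case (x, false) (y, true)  : cross
  · have hn := hN x y false true
    rw [Fin.sum_univ_three, hpick0f, hpick0t, hpick1f, hpick1t, hpick2, hpick2,
        hAc0, hAc1, hAc2] at hn
    have hmark : |(if false then r else 0 : ℝ) - (if true then r else 0)| = r := by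
      norm_num [abs_of_nonneg hr.le]
    rw [hmark] at hn
    have hbdd : BddBelow (Set.range fun z : ↥s => w0 (ρ x z) + w1 (ρ z y) + r) :=
      (Set.finite_range _).bddBelow
    have hrle : r ≤ ⨅ z : ↥s, (w0 (ρ x z) + w1 (ρ z y) + r) :=
      le_ciInf fun z => by linarith [hw0nn _ (hρ_nonneg x z), hw1nn _ (hρ_nonneg z y)]
    have hd0 : w0 (ρ x y) - r ≤ ⨅ z : ↥s, (w0 (ρ x z) + w1 (ρ z y) + r) := by
      apply le_ciInf
      intro z
      have hb := (hband (ρ z y) (hρ_nonneg z y)).1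
      have hsub := concave_subadd hc0 h00 (hρ_nonneg x z) (hρ_nonneg z y)
      have hmon := hm0 (Set.mem_Ici.2 (hρ_nonneg x y))
        (Set.mem_Ici.2 (by linarith [hρ_nonneg x z, hρ_nonneg z y] : (0:ℝ) ≤ ρ x z + ρ z y))
        (hρ_tri x z y)
      linarith
    have hd1 : w1 (ρ x y) - r ≤ ⨅ z : ↥s, (w0 (ρ x z) + w1 (ρ z y) + r) := by
      apply le_ciInf
      intro z
      have hb := (hband (ρ x z) (hρ_nonneg x z)).2
      have hsub := concave_subadd hc1 h10 (hρ_nonneg x z) (hρ_nonneg z y)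
      have hmon := hm1 (Set.mem_Ici.2 (hρ_nonneg x y))
        (Set.mem_Ici.2 (by linarith [hρ_nonneg x z, hρ_nonneg z y] : (0:ℝ) ≤ ρ x z + ρ z y))
        (hρ_tri x z y)
      linarith
    have hdub1 : (⨅ z : ↥s, (w0 (ρ x z) + w1 (ρ z y) + r)) ≤ w1 (ρ x y) + r := by
      have h := ciInf_le hbdd x
      rw [hρ_self x, h00] at h
      linarith
    have hdub0 : (⨅ z : ↥s, (w0 (ρ x z) + w1 (ρ z y) + r)) ≤ w0 (ρ x y) + r := by
      have h := ciInf_le hbdd y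
      rw [hρ_self y, h10] at h
      linarith
    have humap : min (w0 (ρ x y)) (w1 (ρ x y)) = um (ρ x y) := rfl
    constructor
    · show (⨅ z : ↥s, (w0 (ρ x z) + w1 (ρ z y) + r)) ≤ ‖Ψ (x, false) - Ψ (y, true)‖
      rw [hn]
      have hKMl := (hKM x y).1
      have ha := hK0nn x x₀
      have hb := hK1nn x₀ y
      have hdm : (⨅ z : ↥s, (w0 (ρ x z) + w1 (ρ z y) + r)) ≤ um (ρ x y) + r := by
        rw [← humap]
        rcases le_total (w0 (ρ x y)) (w1 (ρ x y)) with h | h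
        · rw [min_eq_left h]; exact hdub0
        · rw [min_eq_right h]; exact hdub1
      linarith
    · show ‖Ψ (x, false) - Ψ (y, true)‖ ≤ 25 * ⨅ z : ↥s, (w0 (ρ x z) + w1 (ρ z y) + r)
      rw [hn]
      have h8a : cutKer ts A0 (ρ x x₀) ≤ 8*r :=
        le_trans (hK0 x x₀).2 (by linarith [hu0le2r (ρ x x₀)])
      have h8b : cutKer ts A1 (ρ x₀ y) ≤ 8*r :=
        le_trans (hK1 x₀ y).2 (by linarith [hu1le2r (ρ x₀ y)])
      have hKMub := (hKM x y).2
      have humd : um (ρ x y) - r ≤ ⨅ z : ↥s, (w0 (ρ x z) + w1 (ρ z y) + r) := by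
        have := humlew0 (ρ x y)
        linarith [hd0]
      have humnn' := humnn (ρ x y) (hρ_nonneg x y)
      rcases le_total (um (ρ x y)) (2*r) with hc | hc
      · linarith [hrle, hKMub, h8a, h8b]
      · linarith [humd, hKMub, h8a, h8b]
  -- case (x, true) (y, false)  : cross
  · have hn := hN x y true false
    rw [Fin.sum_univ_three, hpick0t, hpick0f, hpick1t, hpick1f, hpick2, hpick2,
        hAc0, hAc1, hAc2] at hn
    have hmark : |(if true then r else 0 : ℝ) - (if false then r else 0)| = r := by
      norm_num [abs_of_nonneg hr.le]
    rw [hmark] at hn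
    have hbdd : BddBelow (Set.range fun z : ↥s => w0 (ρ y z) + w1 (ρ z x) + r) :=
      (Set.finite_range _).bddBelow
    have hrle : r ≤ ⨅ z : ↥s, (w0 (ρ y z) + w1 (ρ z x) + r) :=
      le_ciInf fun z => by linarith [hw0nn _ (hρ_nonneg y z), hw1nn _ (hρ_nonneg z x)]
    have hd0 : w0 (ρ y x) - r ≤ ⨅ z : ↥s, (w0 (ρ y z) + w1 (ρ z x) + r) := by
      apply le_ciInf
      intro z
      have hb := (hband (ρ z x) (hρ_nonneg z x)).1
      have hsub := concave_subadd hc0 h00 (hρ_nonneg y z) (hρ_nonneg z x)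
      have hmon := hm0 (Set.mem_Ici.2 (hρ_nonneg y x))
        (Set.mem_Ici.2 (by linarith [hρ_nonneg y z, hρ_nonneg z x] : (0:ℝ) ≤ ρ y z + ρ z x))
        (hρ_tri y z x)
      linarith
    have hdub1 : (⨅ z : ↥s, (w0 (ρ y z) + w1 (ρ z x) + r)) ≤ w1 (ρ y x) + r := by
      have h := ciInf_le hbdd y
      rw [hρ_self y, h00] at h
      linarith
    have hdub0 : (⨅ z : ↥s, (w0 (ρ y z) + w1 (ρ z x) + r)) ≤ w0 (ρ y x) + r := by
      have h := ciInf_le hbdd x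
      rw [hρ_self x, h10] at h
      linarith
    have hsymm : ρ y x = ρ x y := hρ_symm y x
    constructor
    · show (⨅ z : ↥s, (w0 (ρ y z) + w1 (ρ z x) + r)) ≤ ‖Ψ (x, true) - Ψ (y, false)‖
      rw [hn]
      have hKMl := (hKM x y).1
      have ha := hK0nn x₀ y
      have hb := hK1nn x x₀
      have hdm : (⨅ z : ↥s, (w0 (ρ y z) + w1 (ρ z x) + r)) ≤ um (ρ x y) + r := by
        rw [humdef]
        dsimp only
        rcases le_total (w0 (ρ x y)) (w1 (ρ x y)) with h | h
        · rw [min_eq_left h, ← hsymm]; exact hdub0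
        · rw [min_eq_right h, ← hsymm]; exact hdub1
      linarith
    · show ‖Ψ (x, true) - Ψ (y, false)‖ ≤ 25 * ⨅ z : ↥s, (w0 (ρ y z) + w1 (ρ z x) + r)
      rw [hn]
      have h8a : cutKer ts A0 (ρ x₀ y) ≤ 8*r :=
        le_trans (hK0 x₀ y).2 (by linarith [hu0le2r (ρ x₀ y)])
      have h8b : cutKer ts A1 (ρ x x₀) ≤ 8*r :=
        le_trans (hK1 x x₀).2 (by linarith [hu1le2r (ρ x x₀)])
      have hKMub := (hKM x y).2
      have humd : um (ρ x y) - r ≤ ⨅ z : ↥s, (w0 (ρ y z) + w1 (ρ z x) + r) := by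
        have := humlew0 (ρ x y)
        rw [← hsymm] at this ⊢
        linarith [hd0, humlew0 (ρ y x)]
      have humnn' := humnn (ρ x y) (hρ_nonneg x y)
      rcases le_total (um (ρ x y)) (2*r) with hc | hc
      · linarith [hrle, hKMub, h8a, h8b]
      · linarith [humd, hKMub, h8a, h8b]
  -- case (x, true) (y, true)
  · have hn := hN x y true true
    rw [Fin.sum_univ_three, hpick0t, hpick0t, hpick1t, hpick1t, hpick2, hpick2,
        hAc0, hAc1, hAc2, hK0diag x₀] at hn
    simp only [if_pos, sub_self, abs_zero, zero_add, add_zero] at hn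
    have h1 := (hK1 x y).1
    have h2 := (hK1 x y).2
    have h3 := (hKM x y).1
    have h4 := (hKM x y).2
    constructor
    · show w1 (ρ x y) ≤ ‖Ψ (x, true) - Ψ (y, true)‖
      rw [hn]
      have := hlow1 (ρ x y) (hρ_nonneg x y)
      linarith
    · show ‖Ψ (x, true) - Ψ (y, true)‖ ≤ 25 * w1 (ρ x y)
      rw [hn]
      have := hu1lew1 (ρ x y)
      have := humlew1 (ρ x y)
      have := hw1nn (ρ x y) (hρ_nonneg x y)
      linarith
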